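/- arXiv:2210.02190 — 2 statements merged into one kernel-verified Lean document; each statement's English description precedes it below -/
import Mathlib

section
/- Single-source bound: for a source distribution S, target distribution T, target labeling function f_T : X → [0,1], pseudo-labeling function f_S : X → [0,1], and any hypothesis h : X → [0,1], the target risk satisfies E_{x~T}[|h(x) - f_T(x)|] ≤ E_{x~S}[|h(x) - f_S(x)|] + d1(S,T) + min{ E_{x~S}[|f_S(x) - f_T(x)|], E_{x~T}[|f_S(x) - f_T(x)|] }, where d1 is the L1-distance. -/
open MeasureTheory Set

noncomputable def L1dist {X : Type*} [MeasurableSpace X] (D1 D2 : Measure X) : ℝ :=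
  2 * ⨆ B : {s : Set X // MeasurableSet s}, |(D1 B.1).toReal - (D2 B.1).toReal|

lemma key_int {X : Type*} [MeasurableSpace X] (μ : Measure X) [IsProbabilityMeasure μ]
    (g : X → ℝ) (hg : Measurable g) (hg01 : ∀ x, g x ∈ Icc (0:ℝ) 1) :
    Integrable g μ := by
  refine (integrable_const (1:ℝ)).mono' hg.aestronglyMeasurable ?_
  refine ae_of_all _ fun x => ?_
  rw [Real.norm_eq_abs, abs_of_nonneg (hg01 x).1]; exact (hg01 x).2

lemma key_lemma {X : Type*} [MeasurableSpace X] (S T : Measure X)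
    [IsProbabilityMeasure S] [IsProbabilityMeasure T]
    (g : X → ℝ) (hg : Measurable g) (hg01 : ∀ x, g x ∈ Icc (0:ℝ) 1) :
    ∫ x, g x ∂T ≤ ∫ x, g x ∂S + L1dist S T := by
  set s : ℝ := ⨆ B : {s : Set X // MeasurableSet s}, |(S B.1).toReal - (T B.1).toReal| with hs
  have hbdd : BddAbove (Set.range fun B : {s : Set X // MeasurableSet s} =>
      |(S B.1).toReal - (T B.1).toReal|) := by
    refine ⟨2, ?_⟩
    rintro x ⟨B, rfl⟩
    have h1 : (S B.1).toReal ≤ 1 := by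
      have := prob_le_one (μ := S) (s := B.1)
      simpa using ENNReal.toReal_le_of_le_ofReal one_pos.le (by simpa using this)
    have h2 : (T B.1).toReal ≤ 1 := by
      have := prob_le_one (μ := T) (s := B.1)
      simpa using ENNReal.toReal_le_of_le_ofReal one_pos.le (by simpa using this)
    have h1' : 0 ≤ (S B.1).toReal := ENNReal.toReal_nonneg
    have h2' : 0 ≤ (T B.1).toReal := ENNReal.toReal_nonneg
    rw [abs_le]; constructor <;> linarith
  have hs_nonneg : 0 ≤ s := by
    refine le_trans ?_ (le_ciSup hbdd ⟨∅, MeasurableSet.empty⟩)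
    positivity
  have hsle : ∀ t : ℝ, (T {a | t ≤ g a}).toReal ≤ (S {a | t ≤ g a}).toReal + s := by
    intro t
    have hB : MeasurableSet {a | t ≤ g a} := measurableSet_le measurable_const hg
    have := le_ciSup hbdd ⟨{a | t ≤ g a}, hB⟩
    have h2 := abs_le.mp this
    linarith [h2.1]
  have hTint := key_int T g hg hg01
  have hSint := key_int S g hg hg01
  have hTlayer : ∫ x, g x ∂T = ∫ t in Ioc (0:ℝ) 1, (T {a | t ≤ g a}).toReal :=
    hTint.integral_eq_integral_Ioc_meas_le (ae_of_all _ fun x => (hg01 x).1)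
      (ae_of_all _ fun x => (hg01 x).2)
  have hSlayer : ∫ x, g x ∂S = ∫ t in Ioc (0:ℝ) 1, (S {a | t ≤ g a}).toReal :=
    hSint.integral_eq_integral_Ioc_meas_le (ae_of_all _ fun x => (hg01 x).1)
      (ae_of_all _ fun x => (hg01 x).2)
  have antiT : Antitone fun t : ℝ => T {a | t ≤ g a} :=
    fun u v huv => measure_mono fun x hx => huv.trans hx
  have antiS : Antitone fun t : ℝ => S {a | t ≤ g a} :=
    fun u v huv => measure_mono fun x hx => huv.trans hx
  have measT : Measurable fun t : ℝ => (T {a | t ≤ g a}).toReal :=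
    antiT.measurable.ennreal_toReal
  have measS : Measurable fun t : ℝ => (S {a | t ≤ g a}).toReal :=
    antiS.measurable.ennreal_toReal
  have intc : IntegrableOn (fun _ : ℝ => (1:ℝ)) (Ioc 0 1) :=
    (integrableOn_const_iff).mpr (Or.inr (by simp))
  have intcs : IntegrableOn (fun _ : ℝ => s) (Ioc 0 1) :=
    (integrableOn_const_iff).mpr (Or.inr (by simp))
  have intT : IntegrableOn (fun t : ℝ => (T {a | t ≤ g a}).toReal) (Ioc 0 1) := by
    refine intc.mono' measT.aestronglyMeasurable ?_
    refine ae_of_all _ fun t => ?_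
    rw [Real.norm_eq_abs, abs_of_nonneg ENNReal.toReal_nonneg]
    exact ENNReal.toReal_le_of_le_ofReal one_pos.le (by simpa using prob_le_one)
  have intS : IntegrableOn (fun t : ℝ => (S {a | t ≤ g a}).toReal) (Ioc 0 1) := by
    refine intc.mono' measS.aestronglyMeasurable ?_
    refine ae_of_all _ fun t => ?_
    rw [Real.norm_eq_abs, abs_of_nonneg ENNReal.toReal_nonneg]
    exact ENNReal.toReal_le_of_le_ofReal one_pos.le (by simpa using prob_le_one)
  have step : ∫ t in Ioc (0:ℝ) 1, (T {a | t ≤ g a}).toReal ≤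
      ∫ t in Ioc (0:ℝ) 1, ((S {a | t ≤ g a}).toReal + s) := by
    refine setIntegral_mono_on intT (intS.add intcs) measurableSet_Ioc fun t _ => hsle t
  have calc2 : ∫ t in Ioc (0:ℝ) 1, ((S {a | t ≤ g a}).toReal + s) =
      (∫ t in Ioc (0:ℝ) 1, (S {a | t ≤ g a}).toReal) + s := by
    rw [integral_add intS intcs]
    simp [Real.volume_Ioc]
  have : L1dist S T = 2 * s := rfl
  rw [hTlayer, hSlayer, this]
  calc _ ≤ _ := step
    _ = (∫ t in Ioc (0:ℝ) 1, (S {a | t ≤ g a}).toReal) + s := calc2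
    _ ≤ _ := by linarith

theorem stmt_3 {X : Type*} [MeasurableSpace X]
    (S T : Measure X) [IsProbabilityMeasure S] [IsProbabilityMeasure T]
    (h fS fT : X → ℝ) (hh : Measurable h) (hfS : Measurable fS) (hfT : Measurable fT)
    (hh01 : ∀ x, h x ∈ Icc (0:ℝ) 1) (hfS01 : ∀ x, fS x ∈ Icc (0:ℝ) 1)
    (hfT01 : ∀ x, fT x ∈ Icc (0:ℝ) 1) :
    ∫ x, |h x - fT x| ∂T ≤
      ∫ x, |h x - fS x| ∂S + L1dist S T +
        min (∫ x, |fS x - fT x| ∂S) (∫ x, |fS x - fT x| ∂T) := by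
  have abs01 : ∀ (u v : X → ℝ), (∀ x, u x ∈ Icc (0:ℝ) 1) → (∀ x, v x ∈ Icc (0:ℝ) 1) →
      ∀ x, |u x - v x| ∈ Icc (0:ℝ) 1 := by
    intro u v hu hv x
    have h1 := hu x; have h2 := hv x
    simp only [mem_Icc] at *
    constructor
    · positivity
    · rw [abs_le]; constructor <;> linarith [h1.1, h1.2, h2.1, h2.2]
  have mhfT : Measurable fun x => |h x - fT x| := (hh.sub hfT).abs
  have mhfS : Measurable fun x => |h x - fS x| := (hh.sub hfS).abs
  have mffd : Measurable fun x => |fS x - fT x| := (hfS.sub hfT).abs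
  have bhfT := abs01 h fT hh01 hfT01
  have bhfS := abs01 h fS hh01 hfS01
  have bffd := abs01 fS fT hfS01 hfT01
  have tri : ∀ x, |h x - fT x| ≤ |h x - fS x| + |fS x - fT x| := by
    intro x
    calc |h x - fT x| = |(h x - fS x) + (fS x - fT x)| := by ring_nf
      _ ≤ _ := abs_add_le _ _
  -- Route A: via T
  have routeA : ∫ x, |h x - fT x| ∂T ≤
      ∫ x, |h x - fS x| ∂S + L1dist S T + ∫ x, |fS x - fT x| ∂T := by
    have step1 : ∫ x, |h x - fT x| ∂T ≤
        ∫ x, (|h x - fS x| + |fS x - fT x|) ∂T :=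
      integral_mono (key_int T _ mhfT bhfT)
        ((key_int T _ mhfS bhfS).add (key_int T _ mffd bffd)) tri
    rw [integral_add (key_int T _ mhfS bhfS) (key_int T _ mffd bffd)] at step1
    have step2 := key_lemma S T _ mhfS bhfS
    linarith
  -- Route B: via S
  have routeB : ∫ x, |h x - fT x| ∂T ≤
      ∫ x, |h x - fS x| ∂S + L1dist S T + ∫ x, |fS x - fT x| ∂S := by
    have step1 := key_lemma S T _ mhfT bhfT
    have step2 : ∫ x, |h x - fT x| ∂S ≤
        ∫ x, (|h x - fS x| + |fS x - fT x|) ∂S :=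
      integral_mono (key_int S _ mhfT bhfT)
        ((key_int S _ mhfS bhfS).add (key_int S _ mffd bffd)) tri
    rw [integral_add (key_int S _ mhfS bhfS) (key_int S _ mffd bffd)] at step2
    linarith
  rcases le_total (∫ x, |fS x - fT x| ∂S) (∫ x, |fS x - fT x| ∂T) with hle | hle
  · rw [min_eq_left hle]; exact routeB
  · rw [min_eq_right hle]; exact routeA
end

section
/- Multi-source weighted bound (Theorem 1 of the paper): given K client distributions T_1,...,T_K with labeling functions f_1,...,f_K : X → [0,1], a server distribution S with pseudo-labeling function f̂_s : X → [0,1], convex weights λ_1,...,λ_K ≥ 0 with Σ_k λ_k = 1, and any hypothesis h : X → [0,1], it holds that Σ_k λ_k E_{x~T_k}[|h(x) - f_k(x)|] ≤ E_{x~S}[|h(x) - f̂_s(x)|] + Σ_k λ_k d1(S, T_k) + min{ Σ_k λ_k E_{x~S}[|f̂_s(x) - f_k(x)|], Σ_k λ_k E_{x~T_k}[|f̂_s(x) - f_k(x)|] }. -/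
open MeasureTheory Set

lemma aux_int {X : Type*} [MeasurableSpace X] (μ : Measure X) [IsProbabilityMeasure μ]
    {g : X → ℝ} (hg : Measurable g) (h0 : ∀ x, 0 ≤ g x) (h1 : ∀ x, g x ≤ 1) :
    Integrable g μ := by
  refine (integrable_const (1:ℝ)).mono' hg.aestronglyMeasurable
    (Filter.Eventually.of_forall fun x => ?_)
  rw [Real.norm_eq_abs, abs_of_nonneg (h0 x)]
  exact h1 x

lemma key_shift {X : Type*} [MeasurableSpace X] (S T : Measure X)
    [IsProbabilityMeasure S] [IsProbabilityMeasure T]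
    {g : X → ℝ} (hg : Measurable g) (h0 : ∀ x, 0 ≤ g x) (h1 : ∀ x, g x ≤ 1) :
    ∫ x, g x ∂T ≤ ∫ x, g x ∂S + L1dist S T := by
  set c := ⨆ B : {s : Set X // MeasurableSet s}, |(S B.1).toReal - (T B.1).toReal| with hc
  have htoReal_le_one : ∀ (μ : Measure X) [IsProbabilityMeasure μ] (B : Set X),
      (μ B).toReal ≤ 1 := by
    intro μ _ B
    simpa using ENNReal.toReal_mono ENNReal.one_ne_top (prob_le_one (μ := μ) (s := B))
  have hbdd : BddAbove (Set.range fun B : {s : Set X // MeasurableSet s} =>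
      |(S B.1).toReal - (T B.1).toReal|) := by
    refine ⟨1, ?_⟩
    rintro _ ⟨B, rfl⟩
    have h1 := htoReal_le_one S B.1
    have h2 := htoReal_le_one T B.1
    have h3 : (0:ℝ) ≤ (S B.1).toReal := ENNReal.toReal_nonneg
    have h4 : (0:ℝ) ≤ (T B.1).toReal := ENNReal.toReal_nonneg
    rw [abs_sub_le_iff]; constructor <;> linarith
  have hcB : ∀ (B : Set X), MeasurableSet B → |(S B).toReal - (T B).toReal| ≤ c :=
    fun B hB => le_ciSup hbdd ⟨B, hB⟩
  have hc0 : 0 ≤ c := le_trans (by simp) (hcB ∅ MeasurableSet.empty)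
  have hT := (aux_int T hg h0 h1).integral_eq_integral_Ioc_meas_le (M := 1)
    (Filter.Eventually.of_forall h0) (Filter.Eventually.of_forall h1)
  have hS := (aux_int S hg h0 h1).integral_eq_integral_Ioc_meas_le (M := 1)
    (Filter.Eventually.of_forall h0) (Filter.Eventually.of_forall h1)
  have measS0 : Measurable fun t : ℝ => S {a | t ≤ g a} :=
    Antitone.measurable (f := fun t : ℝ => S {a | t ≤ g a})
      (fun s t hst => measure_mono fun a ha => le_trans hst ha)
  have measS : Measurable fun t : ℝ => (S {a | t ≤ g a}).toReal := measS0.ennreal_toReal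
  have intS : Integrable (fun t : ℝ => (S {a | t ≤ g a}).toReal)
      (volume.restrict (Ioc (0:ℝ) 1)) := by
    refine (integrable_const (1:ℝ)).mono' measS.aestronglyMeasurable
      (Filter.Eventually.of_forall fun t => ?_)
    rw [Real.norm_eq_abs, abs_of_nonneg ENNReal.toReal_nonneg]
    exact htoReal_le_one S _
  have intSc : Integrable (fun t : ℝ => (S {a | t ≤ g a}).toReal + c)
      (volume.restrict (Ioc (0:ℝ) 1)) := intS.add (integrable_const c)
  have step : ∫ t in Ioc (0:ℝ) 1, (T {a | t ≤ g a}).toReal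
      ≤ ∫ t in Ioc (0:ℝ) 1, ((S {a | t ≤ g a}).toReal + c) := by
    refine integral_mono_of_nonneg
      (Filter.Eventually.of_forall fun t => ENNReal.toReal_nonneg) intSc
      (Filter.Eventually.of_forall fun t => ?_)
    have hmeas : MeasurableSet {a : X | t ≤ g a} := hg measurableSet_Ici
    have := abs_le.mp (hcB _ hmeas)
    simp only
    linarith [this.1]
  have hsum : ∫ t in Ioc (0:ℝ) 1, ((S {a | t ≤ g a}).toReal + c)
      = (∫ t in Ioc (0:ℝ) 1, (S {a | t ≤ g a}).toReal) + c := by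
    rw [integral_add intS (integrable_const c), setIntegral_const]
    simp [Real.volume_Ioc]
  have : ∫ x, g x ∂T ≤ ∫ x, g x ∂S + c := by
    rw [hT, hS]; rw [hsum] at step; exact step
  have hL : L1dist S T = 2 * c := rfl
  rw [hL]; linarith

theorem stmt_4 {X : Type*} [MeasurableSpace X] {K : ℕ}
    (S : Measure X) [IsProbabilityMeasure S]
    (T : Fin K → Measure X) [∀ k, IsProbabilityMeasure (T k)]
    (h fs : X → ℝ) (f : Fin K → X → ℝ)
    (hh : Measurable h) (hfs : Measurable fs) (hf : ∀ k, Measurable (f k))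
    (hh01 : ∀ x, h x ∈ Icc (0:ℝ) 1) (hfs01 : ∀ x, fs x ∈ Icc (0:ℝ) 1)
    (hf01 : ∀ k x, f k x ∈ Icc (0:ℝ) 1)
    (lam : Fin K → ℝ) (hlam : ∀ k, 0 ≤ lam k) (hlam1 : ∑ k, lam k = 1) :
    ∑ k, lam k * ∫ x, |h x - f k x| ∂(T k) ≤
      ∫ x, |h x - fs x| ∂S + ∑ k, lam k * L1dist S (T k) +
        min (∑ k, lam k * ∫ x, |fs x - f k x| ∂S)
            (∑ k, lam k * ∫ x, |fs x - f k x| ∂(T k)) := by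
  -- basic measurability / bounds for the absolute differences
  have habs : ∀ (u v : X → ℝ), (∀ x, u x ∈ Icc (0:ℝ) 1) → (∀ x, v x ∈ Icc (0:ℝ) 1) →
      ∀ x, |u x - v x| ≤ 1 := by
    intro u v hu hv x
    have h1 := hu x; have h2 := hv x
    rw [abs_sub_le_iff]
    constructor <;> [linarith [h1.2, h2.1]; linarith [h1.1, h2.2]]
  have mhfs : Measurable fun x => |h x - fs x| := (hh.sub hfs).abs
  have mhf : ∀ k, Measurable fun x => |h x - f k x| := fun k => (hh.sub (hf k)).abs
  have mfsf : ∀ k, Measurable fun x => |fs x - f k x| := fun k => (hfs.sub (hf k)).abs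
  -- key per-k bounds
  have keyA : ∀ k, ∫ x, |h x - f k x| ∂(T k)
      ≤ ∫ x, |h x - fs x| ∂S + L1dist S (T k) + ∫ x, |fs x - f k x| ∂(T k) := by
    intro k
    have tri : ∫ x, |h x - f k x| ∂(T k)
        ≤ ∫ x, |h x - fs x| ∂(T k) + ∫ x, |fs x - f k x| ∂(T k) := by
      rw [← integral_add (aux_int (T k) mhfs (fun x => abs_nonneg _) (habs h fs hh01 hfs01))
        (aux_int (T k) (mfsf k) (fun x => abs_nonneg _) (habs fs (f k) hfs01 (hf01 k)))]
      refine integral_mono (aux_int (T k) (mhf k) (fun x => abs_nonneg _)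
        (habs h (f k) hh01 (hf01 k))) ?_ fun x => ?_
      · exact (aux_int (T k) mhfs (fun x => abs_nonneg _) (habs h fs hh01 hfs01)).add
          (aux_int (T k) (mfsf k) (fun x => abs_nonneg _) (habs fs (f k) hfs01 (hf01 k)))
      · simpa using abs_sub_le (h x) (fs x) (f k x)
    have shift := key_shift S (T k) mhfs (fun x => abs_nonneg _) (habs h fs hh01 hfs01)
    linarith
  have keyB : ∀ k, ∫ x, |h x - f k x| ∂(T k)
      ≤ ∫ x, |h x - fs x| ∂S + L1dist S (T k) + ∫ x, |fs x - f k x| ∂S := by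
    intro k
    have shift := key_shift S (T k) (mhf k) (fun x => abs_nonneg _) (habs h (f k) hh01 (hf01 k))
    have tri : ∫ x, |h x - f k x| ∂S
        ≤ ∫ x, |h x - fs x| ∂S + ∫ x, |fs x - f k x| ∂S := by
      rw [← integral_add (aux_int S mhfs (fun x => abs_nonneg _) (habs h fs hh01 hfs01))
        (aux_int S (mfsf k) (fun x => abs_nonneg _) (habs fs (f k) hfs01 (hf01 k)))]
      refine integral_mono (aux_int S (mhf k) (fun x => abs_nonneg _)
        (habs h (f k) hh01 (hf01 k))) ?_ fun x => ?_
      · exact (aux_int S mhfs (fun x => abs_nonneg _) (habs h fs hh01 hfs01)).add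
          (aux_int S (mfsf k) (fun x => abs_nonneg _) (habs fs (f k) hfs01 (hf01 k)))
      · simpa using abs_sub_le (h x) (fs x) (f k x)
    linarith
  have part1 : ∑ k, lam k * ∫ x, |h x - f k x| ∂(T k) ≤
      ∫ x, |h x - fs x| ∂S + ∑ k, lam k * L1dist S (T k)
        + ∑ k, lam k * ∫ x, |fs x - f k x| ∂S := by
    calc ∑ k, lam k * ∫ x, |h x - f k x| ∂(T k)
        ≤ ∑ k, lam k * (∫ x, |h x - fs x| ∂S + L1dist S (T k) + ∫ x, |fs x - f k x| ∂S) :=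
          Finset.sum_le_sum fun k _ => mul_le_mul_of_nonneg_left (keyB k) (hlam k)
      _ = ∫ x, |h x - fs x| ∂S + ∑ k, lam k * L1dist S (T k)
            + ∑ k, lam k * ∫ x, |fs x - f k x| ∂S := by
          simp only [mul_add, Finset.sum_add_distrib, ← Finset.sum_mul, hlam1, one_mul]
  have part2 : ∑ k, lam k * ∫ x, |h x - f k x| ∂(T k) ≤
      ∫ x, |h x - fs x| ∂S + ∑ k, lam k * L1dist S (T k)
        + ∑ k, lam k * ∫ x, |fs x - f k x| ∂(T k) := by
    calc ∑ k, lam k * ∫ x, |h x - f k x| ∂(T k)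
        ≤ ∑ k, lam k * (∫ x, |h x - fs x| ∂S + L1dist S (T k) + ∫ x, |fs x - f k x| ∂(T k)) :=
          Finset.sum_le_sum fun k _ => mul_le_mul_of_nonneg_left (keyA k) (hlam k)
      _ = ∫ x, |h x - fs x| ∂S + ∑ k, lam k * L1dist S (T k)
            + ∑ k, lam k * ∫ x, |fs x - f k x| ∂(T k) := by
          simp only [mul_add, Finset.sum_add_distrib, ← Finset.sum_mul, hlam1, one_mul]
  rw [← min_add_add_left]
  exact le_min part1 part2
end
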